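/- The second moment of the symmetric generalized binomial distribution is ∑_{k=0}^n k² 𝔭_k^{(n)}(η) = η n² + η(η−1) c_n, and hence the variance is η(1−η)(n² − c_n), where c_n is defined by t² N'(t)²/N(t)² · N(t) = ∑_{n} c_n t^n/x_n!, i.e., t² N'(t)²/N(t) = ∑_{n≥0} (c_n/x_n!) t^n. -/

import Mathlib

open PowerSeries Finset

/-- Formal exponential of a power series (intended for series with zero constant term):
coefficientwise `exp F = ∑_k F^k / k!`, which is a finite sum in each coefficient. -/
noncomputable def expS (F : PowerSeries ℝ) : PowerSeries ℝ :=
  PowerSeries.mk fun n => ∑ k ∈ Finset.range (n + 1),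
    (1 / (k.factorial : ℝ)) * PowerSeries.coeff n (F ^ k)

/-- Formal logarithm of a power series (intended for series with constant term 1):
coefficientwise `log N = ∑_{k≥1} (-1)^{k+1} (N-1)^k / k`. -/
noncomputable def logS (N : PowerSeries ℝ) : PowerSeries ℝ :=
  PowerSeries.mk fun n => ∑ k ∈ Finset.range (n + 1),
    ((-1 : ℝ) ^ (k + 1) / (k : ℝ)) * PowerSeries.coeff n ((N - 1) ^ k)

/-- The formal power `N^η := exp (η · log N)`. -/
noncomputable def powS (N : PowerSeries ℝ) (η : ℝ) : PowerSeries ℝ :=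
  expS (η • logS N)

/-- Deformed factorial `x_n! = x_1 x_2 ⋯ x_n`, with `x_0! = 1`. -/
noncomputable def xfac (x : ℕ → ℝ) (n : ℕ) : ℝ := ∏ k ∈ Finset.Icc 1 n, x k

namespace Stmt10Aux

lemma coeff_pow_zero {F : PowerSeries ℝ} (hF : constantCoeff F = 0) :
    ∀ k n : ℕ, n < k → coeff n (F ^ k) = 0 := by
  intro k
  induction k with
  | zero => intro n h; exact absurd h (Nat.not_lt_zero n)
  | succ k ih =>
    intro n h
    rw [pow_succ, coeff_mul]
    apply Finset.sum_eq_zero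
    rintro ⟨i, j⟩ hij
    rw [Finset.HasAntidiagonal.mem_antidiagonal] at hij
    by_cases hi : i < k
    · rw [ih i hi, zero_mul]
    · have hj : j = 0 := by omega
      subst hj
      rw [coeff_zero_eq_constantCoeff_apply, hF, mul_zero]

lemma coeff_derivativeFun' (f : PowerSeries ℝ) (n : ℕ) :
    coeff n f.derivativeFun = coeff (n + 1) f * (n + 1) := coeff_derivative f n

lemma derivativeFun_zero : derivativeFun (0 : PowerSeries ℝ) = 0 := by
  have h := derivativeFun_C (R := ℝ) (r := 0)
  rwa [map_zero] at h

lemma derivativeFun_sum {ι : Type*} (s : Finset ι) (f : ι → PowerSeries ℝ) :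
    derivativeFun (∑ i ∈ s, f i) = ∑ i ∈ s, derivativeFun (f i) := by
  classical
  induction s using Finset.induction with
  | empty => simp [derivativeFun_zero]
  | insert _ _ h ih => rw [Finset.sum_insert h, derivativeFun_add, ih, Finset.sum_insert h]

lemma derivativeFun_sub (f g : PowerSeries ℝ) :
    derivativeFun (f - g) = derivativeFun f - derivativeFun g := by
  have h := derivativeFun_add (f - g) g
  rw [sub_add_cancel] at h
  linear_combination -h

lemma derivativeFun_pow (F : PowerSeries ℝ) (k : ℕ) :
    derivativeFun (F ^ (k+1)) = C ((k : ℝ) + 1) * (F ^ k * derivativeFun F) := by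
  induction k with
  | zero => simp [pow_one, pow_zero, one_mul]
  | succ k ih =>
    rw [pow_succ _ (k+1), derivativeFun_mul, ih, smul_eq_mul, smul_eq_mul]
    have : C ((k : ℝ) + 1 + 1) = C ((k : ℝ) + 1) + 1 := by
      rw [map_add, map_one]
    push_cast
    rw [this]
    ring

/-- Truncated exponential sum. -/
noncomputable def ES (F : PowerSeries ℝ) (m : ℕ) : PowerSeries ℝ :=
  ∑ k ∈ Finset.range (m + 1), (1 / (k.factorial : ℝ)) • F ^ k

/-- Truncated logarithm sum. -/
noncomputable def LS (G : PowerSeries ℝ) (m : ℕ) : PowerSeries ℝ :=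
  ∑ k ∈ Finset.range (m + 1), ((-1 : ℝ) ^ (k + 1) / (k : ℝ)) • G ^ k

lemma coeff_expS_ES {F : PowerSeries ℝ} (hF : constantCoeff F = 0) {n m : ℕ} (h : n ≤ m) :
    coeff n (expS F) = coeff n (ES F m) := by
  rw [expS, coeff_mk, ES, map_sum]
  simp_rw [coeff_smul, smul_eq_mul]
  exact Finset.sum_subset (Finset.range_subset_range.2 (by omega)) (fun k _ hk => by
    rw [coeff_pow_zero hF k n (by simp [Finset.mem_range] at hk; omega), mul_zero])

lemma coeff_logS_LS {N : PowerSeries ℝ} (hN1 : constantCoeff N = 1) {n m : ℕ} (h : n ≤ m) :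
    coeff n (logS N) = coeff n (LS (N - 1) m) := by
  have hG : constantCoeff (N - 1) = 0 := by simp [hN1]
  rw [logS, coeff_mk, LS, map_sum]
  simp_rw [coeff_smul, smul_eq_mul]
  exact Finset.sum_subset (Finset.range_subset_range.2 (by omega)) (fun k _ hk => by
    rw [coeff_pow_zero hG k n (by simp [Finset.mem_range] at hk; omega), mul_zero])

lemma constantCoeff_expS (F : PowerSeries ℝ) : constantCoeff (expS F) = 1 := by
  simp [expS, constantCoeff_mk]

lemma constantCoeff_logS (N : PowerSeries ℝ) : constantCoeff (logS N) = 0 := by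
  simp [logS, constantCoeff_mk]

lemma constantCoeff_powS (N : PowerSeries ℝ) (η : ℝ) :
    constantCoeff (powS N η) = 1 := constantCoeff_expS _

lemma coeff_mul_congr (A B B' : PowerSeries ℝ) (n : ℕ)
    (h : ∀ j, j ≤ n → coeff j B = coeff j B') :
    coeff n (A * B) = coeff n (A * B') := by
  rw [coeff_mul, coeff_mul]
  refine Finset.sum_congr rfl ?_
  rintro ⟨i, j⟩ hij
  rw [Finset.HasAntidiagonal.mem_antidiagonal] at hij
  rw [h j (by omega)]

lemma deriv_ES (F : PowerSeries ℝ) (m : ℕ) :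
    derivativeFun (ES F (m+1)) = derivativeFun F * ES F m := by
  rw [ES, Finset.sum_range_succ', derivativeFun_add, derivativeFun_sum]
  have h0 : derivativeFun ((1 / ((Nat.factorial 0 : ℕ) : ℝ)) • F ^ 0) = 0 := by
    rw [pow_zero, derivativeFun_smul, derivativeFun_one, smul_zero]
  rw [h0, add_zero, ES, Finset.mul_sum]
  refine Finset.sum_congr rfl fun k hk => ?_
  rw [derivativeFun_smul, derivativeFun_pow, smul_eq_C_mul, smul_eq_C_mul, ← mul_assoc,
    ← map_mul]
  have hs : 1 / (((k+1).factorial : ℕ) : ℝ) * ((k : ℝ) + 1) = 1 / ((k.factorial : ℕ) : ℝ) := by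
    have h1 : ((k.factorial : ℕ) : ℝ) ≠ 0 := Nat.cast_ne_zero.2 k.factorial_ne_zero
    have h2 : ((k : ℝ) + 1) ≠ 0 := by positivity
    rw [Nat.factorial_succ]
    push_cast
    field_simp
  rw [hs]
  ring

lemma deriv_expS (F : PowerSeries ℝ) (hF : constantCoeff F = 0) :
    derivativeFun (expS F) = derivativeFun F * expS F := by
  ext n
  rw [coeff_derivativeFun', coeff_expS_ES hF (show n+1 ≤ n+1 from le_rfl),
    ← coeff_derivativeFun', deriv_ES]
  exact coeff_mul_congr _ _ _ n (fun j hj => (coeff_expS_ES hF hj).symm)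

lemma deriv_LS (G : PowerSeries ℝ) (m : ℕ) :
    (1 + G) * derivativeFun (LS G (m+1)) = derivativeFun G * (1 - (-G)^(m+1)) := by
  have hS : derivativeFun (LS G (m+1)) = derivativeFun G * ∑ k ∈ range (m+1), (-G)^k := by
    rw [LS, Finset.sum_range_succ', derivativeFun_add, derivativeFun_sum]
    have h0 : derivativeFun (((-1 : ℝ) ^ (0 + 1) / ((0 : ℕ) : ℝ)) • G ^ 0) = 0 := by
      norm_num [derivativeFun_zero]
    rw [h0, add_zero, Finset.mul_sum]
    refine Finset.sum_congr rfl fun k hk => ?_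
    rw [derivativeFun_smul, derivativeFun_pow, smul_eq_C_mul, ← mul_assoc, ← map_mul]
    have hs : (-1 : ℝ) ^ (k + 1 + 1) / (((k+1 : ℕ)) : ℝ) * ((k : ℝ) + 1) = (-1 : ℝ) ^ k := by
      have h2 : ((k : ℝ) + 1) ≠ 0 := by positivity
      push_cast
      field_simp
      ring
    rw [hs]
    have hC : C ((-1 : ℝ) ^ k) = (-1 : PowerSeries ℝ) ^ k := by
      rw [map_pow, map_neg, map_one]
    rw [hC, neg_pow]
    ring
  rw [hS]
  have h := geom_sum_mul (-G) (m+1)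
  linear_combination (-(derivativeFun G)) * h

lemma deriv_logS (N : PowerSeries ℝ) (hN1 : constantCoeff N = 1) :
    N * derivativeFun (logS N) = derivativeFun N := by
  have hG : constantCoeff (N - 1) = 0 := by simp [hN1]
  ext n
  rw [coeff_mul_congr N _ (derivativeFun (LS (N-1) (n+1))) n (fun j hj => by
    rw [coeff_derivativeFun', coeff_derivativeFun', coeff_logS_LS hN1 (show j+1 ≤ n+1 by omega)])]
  have h1 : N * derivativeFun (LS (N-1) (n+1)) =
      derivativeFun (N-1) * (1 - (-(N-1))^(n+1)) := by
    have h := deriv_LS (N-1) n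
    linear_combination h
  rw [h1]
  have hDG : derivativeFun (N - 1) = derivativeFun N := by
    have h := derivativeFun_sub N 1
    rw [derivativeFun_one, sub_zero] at h
    exact h
  rw [hDG, mul_sub, mul_one, map_sub]
  have hz : coeff n (derivativeFun N * (-(N-1))^(n+1)) = 0 := by
    rw [coeff_mul]
    apply Finset.sum_eq_zero
    rintro ⟨i, j⟩ hij
    rw [Finset.HasAntidiagonal.mem_antidiagonal] at hij
    rw [coeff_pow_zero (by rw [map_neg, hG, neg_zero]) (n+1) j (by omega), mul_zero]
  rw [hz, sub_zero]

lemma deriv_powS (N : PowerSeries ℝ) (η : ℝ) (hN1 : constantCoeff N = 1) :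
    N * derivativeFun (powS N η) = C η * (derivativeFun N * powS N η) := by
  have hL0 : constantCoeff (η • logS N) = 0 := by
    rw [smul_eq_C_mul, map_mul, constantCoeff_logS, mul_zero]
  have h := deriv_logS N hN1
  rw [powS, deriv_expS _ hL0, derivativeFun_smul, smul_eq_C_mul]
  linear_combination C η * expS (η • logS N) * h

lemma ode_unique (N W : PowerSeries ℝ) (hN0 : constantCoeff N ≠ 0)
    (h : N * derivativeFun W = derivativeFun N * W) (hW : constantCoeff W = 0) :
    W = 0 := by
  have key : ∀ n, coeff n W = 0 := by
    intro n
    induction n using Nat.strong_induction_on with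
    | _ n ih =>
      match n, ih with
      | 0, _ => rw [coeff_zero_eq_constantCoeff_apply]; exact hW
      | (m+1), ih =>
        have h0 : coeff m (N * derivativeFun W) = coeff m (derivativeFun N * W) :=
          congrArg _ h
        rw [coeff_mul, coeff_mul] at h0
        have hL : ∑ p ∈ antidiagonal m, coeff p.1 N * coeff p.2 (derivativeFun W)
            = coeff 0 N * (coeff (m+1) W * ((m : ℝ) + 1)) := by
          rw [Finset.sum_eq_single (0, m)]
          · rw [coeff_derivativeFun']
          · rintro ⟨i, j⟩ hij hne
            rw [Finset.HasAntidiagonal.mem_antidiagonal] at hij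
            have hj : j < m := by
              rcases Nat.lt_or_ge j m with h' | h'
              · exact h'
              · exfalso
                exact hne (by rw [Prod.mk.injEq]; omega)
            rw [coeff_derivativeFun', ih (j+1) (by omega), zero_mul, mul_zero]
          · intro hmem
            exact absurd (Finset.HasAntidiagonal.mem_antidiagonal.2 (by simp)) hmem
        have hR : ∑ p ∈ antidiagonal m, coeff p.1 (derivativeFun N) * coeff p.2 W = 0 := by
          apply Finset.sum_eq_zero
          rintro ⟨i, j⟩ hij
          rw [Finset.HasAntidiagonal.mem_antidiagonal] at hij
          rw [ih j (by omega), mul_zero]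
        rw [hL, hR] at h0
        have hc0 : coeff 0 N = constantCoeff N := coeff_zero_eq_constantCoeff_apply N
        rcases mul_eq_zero.mp h0 with h' | h'
        · exact absurd (hc0 ▸ h') hN0
        · rcases mul_eq_zero.mp h' with h'' | h''
          · exact h''
          · exact absurd h'' (by positivity)
  ext n
  rw [key n, map_zero]

lemma theta_mul (f g : PowerSeries ℝ) :
    X * derivativeFun (f * g) = (X * derivativeFun f) * g + f * (X * derivativeFun g) := by
  rw [derivativeFun_mul, smul_eq_mul, smul_eq_mul]
  ring

lemma coeff_theta (A : PowerSeries ℝ) (m : ℕ) :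
    coeff m (X * derivativeFun A) = (m : ℝ) * coeff m A := by
  cases m with
  | zero => rw [coeff_zero_X_mul]; simp
  | succ m => rw [coeff_succ_X_mul, coeff_derivativeFun']; push_cast; ring

end Stmt10Aux

open Stmt10Aux

theorem stmt10 (x : ℕ → ℝ) (hx : ∀ n, 1 ≤ n → 0 < x n)
    (N : PowerSeries ℝ) (hN : N = PowerSeries.mk fun n => 1 / xfac x n)
    (q : ℕ → ℝ → ℝ)
    (hq : ∀ n η, q n η = xfac x n * PowerSeries.coeff n (powS N η))
    (p : ℕ → ℕ → ℝ → ℝ)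
    (hp : ∀ n k η, p n k η =
      (xfac x n / (xfac x (n - k) * xfac x k)) * q k η * q (n - k) (1 - η))
    (c : ℕ → ℝ)
    (hc : ∀ n, c n = xfac x n *
      PowerSeries.coeff n (PowerSeries.X ^ 2 * N.derivativeFun ^ 2 * N⁻¹)) :
    ∀ (n : ℕ) (η : ℝ),
      (∑ k ∈ Finset.range (n + 1), (k : ℝ) ^ 2 * p n k η
        = η * n ^ 2 + η * (η - 1) * c n) ∧
      (∑ k ∈ Finset.range (n + 1), (k : ℝ) ^ 2 * p n k η)
        - (∑ k ∈ Finset.range (n + 1), (k : ℝ) * p n k η) ^ 2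
        = η * (1 - η) * (n ^ 2 - c n) := by
  have hxf : ∀ m, 0 < xfac x m := fun m =>
    Finset.prod_pos fun k hk => hx k (Finset.mem_Icc.mp hk).1
  have hxf' : ∀ m, xfac x m ≠ 0 := fun m => ne_of_gt (hxf m)
  have hx0 : xfac x 0 = 1 := by
    rw [xfac, Finset.Icc_eq_empty (by omega), Finset.prod_empty]
  have hN1 : constantCoeff N = 1 := by
    rw [hN, constantCoeff_mk, hx0]; norm_num
  have hcoeffN : ∀ m, coeff m N = 1 / xfac x m := fun m => by rw [hN, coeff_mk]
  have hNne : N ≠ 0 := fun h => by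
    rw [h, map_zero] at hN1; exact one_ne_zero hN1.symm
  intro n η
  have hP := deriv_powS N η hN1
  have hQ := deriv_powS N (1-η) hN1
  have hCsum : C η + C (1-η) = 1 := by
    rw [← map_add, show η + (1-η) = 1 by ring, map_one]
  have hU : powS N η * powS N (1-η) = N := by
    have hDPQ : N * derivativeFun (powS N η * powS N (1-η))
        = derivativeFun N * (powS N η * powS N (1-η)) := by
      rw [derivativeFun_mul, smul_eq_mul, smul_eq_mul]
      linear_combination (powS N (1-η)) * hP + (powS N η) * hQ
        + (derivativeFun N * powS N η * powS N (1-η)) * hCsum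
    have hw : N * derivativeFun (powS N η * powS N (1-η) - N)
        = derivativeFun N * (powS N η * powS N (1-η) - N) := by
      rw [derivativeFun_sub]
      linear_combination hDPQ
    have hcc : constantCoeff (powS N η * powS N (1-η) - N) = 0 := by
      rw [map_sub, map_mul, constantCoeff_powS, constantCoeff_powS, hN1]; ring
    exact sub_eq_zero.mp (ode_unique N _ (by rw [hN1]; exact one_ne_zero) hw hcc)
  have hM1 : (X * derivativeFun (powS N η)) * powS N (1-η)
      = C η * (X * derivativeFun N) := by
    apply mul_left_cancel₀ hNne
    linear_combination (X * powS N (1-η)) * hP + (C η * X * derivativeFun N) * hU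
  have hE1 : N * (X * derivativeFun (powS N η))
      = C η * ((X * derivativeFun N) * powS N η) := by
    linear_combination X * hP
  have hE2 : (X * derivativeFun N) * (X * derivativeFun (powS N η))
      + N * (X * derivativeFun (X * derivativeFun (powS N η)))
      = C η * ((X * derivativeFun (X * derivativeFun N)) * powS N η
          + (X * derivativeFun N) * (X * derivativeFun (powS N η))) := by
    have h := congrArg (fun f => X * derivativeFun f) hE1
    rw [theta_mul N (X * derivativeFun (powS N η)),
        theta_mul (C η) ((X * derivativeFun N) * powS N η),
        theta_mul (X * derivativeFun N) (powS N η),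
        (show derivativeFun (C η) = 0 from derivativeFun_C (R := ℝ) (r := η)), mul_zero, zero_mul, zero_add] at h
    linear_combination h
  have hC2 : C (η*(η-1)) = C η * C η - C η := by
    rw [show η*(η-1) = η*η - η by ring, map_sub, map_mul]
  have hinv : N⁻¹ * N = 1 :=
    PowerSeries.inv_mul_cancel N (by rw [hN1]; exact one_ne_zero)
  have hM2 : (X * derivativeFun (X * derivativeFun (powS N η))) * powS N (1-η)
      = C η * (X * derivativeFun (X * derivativeFun N))
        + C (η*(η-1)) * (X^2 * derivativeFun N^2 * N⁻¹) := by
    apply mul_left_cancel₀ (mul_ne_zero hNne hNne)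
    rw [hC2]
    linear_combination (N * powS N (1-η)) * hE2
      + ((C η - 1) * (X * derivativeFun N) * powS N (1-η)) * hE1
      + (C η * N * (X * derivativeFun (X * derivativeFun N))) * hU
      + ((C η * C η - C η) * (X * derivativeFun N) * (X * derivativeFun N)) * hU
      - ((C η * C η - C η) * (X * derivativeFun N) * (X * derivativeFun N) * N) * hinv
  -- sum machinery
  have key : ∀ (f : ℕ → ℝ) (A : PowerSeries ℝ),
      (∀ k, coeff k A = f k * coeff k (powS N η)) →
      (∑ k ∈ Finset.range (n+1), f k * p n k η)
        = xfac x n * coeff n (A * powS N (1-η)) := by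
    intro f A hA
    rw [coeff_mul, Finset.Nat.sum_antidiagonal_eq_sum_range_succ
        (fun i j => coeff i A * coeff j (powS N (1-η))), Finset.mul_sum]
    refine Finset.sum_congr rfl fun k hk => ?_
    rw [hA k, hp, hq, hq]
    field_simp [hxf' k, hxf' (n - k)]
  have hA2 : ∀ k, coeff k (X * derivativeFun (X * derivativeFun (powS N η)))
      = (k:ℝ)^2 * coeff k (powS N η) := fun k => by
    rw [coeff_theta, coeff_theta]; ring
  have hA1 : ∀ k, coeff k (X * derivativeFun (powS N η))
      = (k:ℝ) * coeff k (powS N η) := fun k => coeff_theta _ k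
  have hS2 : ∑ k ∈ Finset.range (n+1), (k:ℝ)^2 * p n k η
      = η * n^2 + η*(η-1)*c n := by
    have h := key (fun k => (k:ℝ)^2) _ hA2
    rw [h, hM2, map_add, coeff_C_mul, coeff_C_mul, coeff_theta, coeff_theta, hcoeffN, hc]
    field_simp [hxf' n]
  have hS1 : ∑ k ∈ Finset.range (n+1), (k:ℝ) * p n k η = η * n := by
    have h := key (fun k => (k:ℝ)) _ hA1
    rw [h, hM1, coeff_C_mul, coeff_theta, hcoeffN]
    field_simp [hxf' n]
  refine ⟨hS2, ?_⟩
  rw [hS2, hS1]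
  ring
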